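/- Let t > 0 and let μ be the infinite product, over n ∈ ℕ, of the real Gaussian measures N(0, t); μ is a probability measure on ℝ^ℕ. Then the set {x ∈ ℝ^ℕ : the family (x_n²)_{n∈ℕ} is summable} has μ-measure 0. (Proposition 2.2: the Cameron–Martin Hilbert space ℓ² is contained in a null Borel set of the infinite-dimensional Gaussian measure.) -/

import Mathlib

open MeasureTheory ProbabilityTheory
open scoped NNReal
open scoped ENNReal

/-- **Proposition 2.2.**  Let `t > 0` and let `μ` be the infinite product, over `n ∈ ℕ`, of
the real Gaussian measures `N(0, t)` — characterized here as a probability measure on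
`ℝ^ℕ` all of whose finite-dimensional marginals are the corresponding finite Gaussian
product measures.  Then the set of `x ∈ ℝ^ℕ` such that `(x_n²)` is summable (i.e. the
Cameron–Martin space `ℓ²`) has `μ`-measure `0`. -/
theorem gaussian_product_measure_ell2_null
    (t : ℝ≥0) (ht : 0 < t) (μ : Measure (ℕ → ℝ)) [IsProbabilityMeasure μ]
    (hμ : ∀ S : Finset ℕ,
      μ.map (fun x (i : S) => x i) = Measure.pi fun _ : S => gaussianReal 0 t) :
    μ {x : ℕ → ℝ | Summable fun n => x n ^ 2} = 0 := by
  set ν := gaussianReal 0 t with hν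
  set p : ℝ≥0∞ := ν (Set.Icc (-1 : ℝ) 1) with hp
  have hνprob : IsProbabilityMeasure ν := by infer_instance
  have hp1 : p < 1 := by
    rw [hp, ← hνprob.measure_univ]
    refine (measure_mono (Set.subset_univ _)).lt_of_ne ?_
    intro h
    have hc : ν (Set.Icc (-1 : ℝ) 1)ᶜ = 0 := by
      rw [measure_compl measurableSet_Icc (measure_ne_top _ _), h, hνprob.measure_univ,
        tsub_self]
    have := gaussianReal_absolutelyContinuous' 0 ht.ne' hc
    have hsub : Set.Ioi (1 : ℝ) ⊆ (Set.Icc (-1 : ℝ) 1)ᶜ := by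
      intro x hx
      simp only [Set.mem_compl_iff, Set.mem_Icc, not_and, not_le]
      intro _; exact hx
    have h0 : (volume (Set.Ioi (1 : ℝ))) = 0 :=
      measure_mono_null hsub this
    simp [Real.volume_Ioi] at h0
  -- the bad sets
  set B : ℕ → Set (ℕ → ℝ) := fun N => {x | ∀ n, N ≤ n → |x n| ≤ 1} with hB
  have hBnull : ∀ N, μ (B N) = 0 := by
    intro N
    have key : ∀ k : ℕ, μ (B N) ≤ p ^ k := by
      intro k
      set S : Finset ℕ := Finset.Ico N (N + k) with hS
      have hmeas : Measurable fun (x : ℕ → ℝ) (i : S) => x i :=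
        measurable_pi_lambda _ fun i => measurable_pi_apply _
      have hset : MeasurableSet (Set.univ.pi fun _ : S => Set.Icc (-1 : ℝ) 1) :=
        MeasurableSet.univ_pi fun _ => measurableSet_Icc
      have hsub : B N ⊆ (fun (x : ℕ → ℝ) (i : S) => x i) ⁻¹'
          (Set.univ.pi fun _ : S => Set.Icc (-1 : ℝ) 1) := by
        intro x hx
        intro i _
        have hi : N ≤ (i : ℕ) := (Finset.mem_Ico.mp i.2).1
        have := hx i hi
        exact abs_le.mp this |>.imp id id |> fun h => ⟨h.1, h.2⟩
      calc μ (B N) ≤ μ ((fun (x : ℕ → ℝ) (i : S) => x i) ⁻¹'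
            (Set.univ.pi fun _ : S => Set.Icc (-1 : ℝ) 1)) := measure_mono hsub
        _ = (μ.map (fun x (i : S) => x i)) (Set.univ.pi fun _ : S => Set.Icc (-1 : ℝ) 1) :=
            (Measure.map_apply hmeas hset).symm
        _ = (Measure.pi fun _ : S => ν) (Set.univ.pi fun _ : S => Set.Icc (-1 : ℝ) 1) := by
            rw [hμ S]
        _ = ∏ _i : S, p := by rw [Measure.pi_pi]
        _ = p ^ k := by
            rw [Finset.prod_const, Finset.card_univ, Fintype.card_coe, hS, Nat.card_Ico]
            simp
    have htend : Filter.Tendsto (fun k => p ^ k) Filter.atTop (nhds 0) :=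
      ENNReal.tendsto_pow_atTop_nhds_zero_of_lt_one hp1
    exact le_antisymm (ge_of_tendsto' htend key) zero_le
  have hsub : {x : ℕ → ℝ | Summable fun n => x n ^ 2} ⊆ ⋃ N, B N := by
    intro x hx
    have h0 : Filter.Tendsto (fun n => x n ^ 2) Filter.atTop (nhds 0) := hx.tendsto_atTop_zero
    have : ∀ᶠ n in Filter.atTop, x n ^ 2 ≤ 1 :=
      h0.eventually_le_const (by norm_num : (0:ℝ) < 1)
    obtain ⟨N, hN⟩ := Filter.eventually_atTop.mp this
    refine Set.mem_iUnion.mpr ⟨N, fun n hn => ?_⟩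
    have := hN n hn
    nlinarith [abs_nonneg (x n), sq_abs (x n)]
  exact measure_mono_null hsub (by rw [measure_iUnion_null_iff]; exact fun N => hBnull N)
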